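/- Let ρ_AB be a separable bipartite state on ℂ^{d_A} ⊗ ℂ^{d_B}, let a ∈ ℝ^m and b ∈ ℝ^n be arbitrary vectors, let {E^A_{α,k}} be an informationally complete (N_A,M_A)-POVM on ℂ^{d_A} with efficiency parameter x_A and {E^B_{β,l}} an informationally complete (N_B,M_B)-POVM on ℂ^{d_B} with efficiency parameter x_B. Then ‖Q_{a,b}(ρ_AB)‖_tr ≤ √(|a|² + (d_A−1)(M_A² x_A + d_A²)/(d_A M_A (M_A−1))) · √(|b|² + (d_B−1)(M_B² x_B + d_B²)/(d_B M_B (M_B−1))). -/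

import Mathlib

open scoped BigOperators ComplexOrder
open Matrix

noncomputable def traceNorm {m n : Type*} [Fintype m] [Fintype n] [DecidableEq n]
    (X : Matrix m n ℂ) : ℝ :=
  ((Matrix.posSemidef_conjTranspose_mul_self X).isHermitian.eigenvectorUnitary.1 *
    Matrix.diagonal (((↑) : ℝ → ℂ) ∘ (Real.sqrt ·) ∘
      (Matrix.posSemidef_conjTranspose_mul_self X).isHermitian.eigenvalues) *
    (star (Matrix.posSemidef_conjTranspose_mul_self X).isHermitian.eigenvectorUnitary :
      Matrix n n ℂ)).trace.re

def IsDensityMatrix {ι : Type*} [Fintype ι] (ρ : Matrix ι ι ℂ) : Prop :=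
  ρ.PosSemidef ∧ ρ.trace = 1

def IsNMPOVM (d N M : ℕ) (x : ℝ)
    (E : Fin N → Fin M → Matrix (Fin d) (Fin d) ℂ) : Prop :=
  (∀ α k, (E α k).PosSemidef) ∧
  (∀ α, ∑ k, E α k = 1) ∧
  (∀ α k, (E α k).trace = (((d : ℝ) / M : ℝ) : ℂ)) ∧
  (∀ α k, (E α k * E α k).trace = (x : ℂ)) ∧
  (∀ α k l, k ≠ l → (E α k * E α l).trace =
      ((((d : ℝ) - M * x) / (M * ((M : ℝ) - 1)) : ℝ) : ℂ)) ∧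
  (∀ α β k l, α ≠ β → (E α k * E β l).trace = (((d : ℝ) / M ^ 2 : ℝ) : ℂ)) ∧
  ((d : ℝ) / M ^ 2 < x ∧ x ≤ min ((d : ℝ) ^ 2 / M ^ 2) ((d : ℝ) / M))

def IsInfoComplete (d N M : ℕ) : Prop := ((M : ℝ) - 1) * N = (d : ℝ) ^ 2 - 1
open Kronecker

/-- Partial trace over the second factor. -/
noncomputable def ptraceB {dA dB : ℕ} (ρ : Matrix (Fin dA × Fin dB) (Fin dA × Fin dB) ℂ) :
    Matrix (Fin dA) (Fin dA) ℂ :=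
  Matrix.of fun i j => ∑ k, ρ (i, k) (j, k)

/-- Partial trace over the first factor. -/
noncomputable def ptraceA {dA dB : ℕ} (ρ : Matrix (Fin dA × Fin dB) (Fin dA × Fin dB) ℂ) :
    Matrix (Fin dB) (Fin dB) ℂ :=
  Matrix.of fun i j => ∑ k, ρ (k, i) (k, j)

/-- A bipartite state is separable if it is a finite convex combination of
tensor products of local density matrices. -/
def SeparableState {dA dB : ℕ} (ρ : Matrix (Fin dA × Fin dB) (Fin dA × Fin dB) ℂ) : Prop :=
  ∃ (K : ℕ) (p : Fin K → ℝ) (ρA : Fin K → Matrix (Fin dA) (Fin dA) ℂ)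
    (ρB : Fin K → Matrix (Fin dB) (Fin dB) ℂ),
    (∀ i, 0 ≤ p i) ∧ (∑ i, p i = 1) ∧
    (∀ i, IsDensityMatrix (ρA i)) ∧ (∀ i, IsDensityMatrix (ρB i)) ∧
    ρ = ∑ i, (p i : ℂ) • (ρA i ⊗ₖ ρB i)

lemma diag_nonneg_of_psd {ι : Type*} [Fintype ι] {M : Matrix ι ι ℂ} (h : M.PosSemidef)
    [DecidableEq ι] (i : ι) : 0 ≤ M i i := by
  exact h.diag_nonneg

lemma trace_nonneg_of_psd {ι : Type*} [Fintype ι] [DecidableEq ι] {M : Matrix ι ι ℂ}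
    (h : M.PosSemidef) : 0 ≤ M.trace :=
  Finset.sum_nonneg fun i _ => diag_nonneg_of_psd h i

lemma traceNorm_mul_conjTranspose_le {m K n : Type*} [Fintype m] [Fintype K] [Fintype n]
    [DecidableEq n] (X : Matrix m K ℂ) (Y : Matrix n K ℂ) :
    traceNorm (X * Yᴴ) ≤ Real.sqrt ((X * Xᴴ).trace.re) * Real.sqrt ((Y * Yᴴ).trace.re) := by
  classical
  set A : Matrix m n ℂ := X * Yᴴ with hAdef
  have hH : (Aᴴ * A).PosSemidef := Matrix.posSemidef_conjTranspose_mul_self A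
  set U : Matrix n n ℂ := (hH.1.eigenvectorUnitary : Matrix n n ℂ) with hUdef
  have hU1 : star U * U = 1 := Matrix.mem_unitaryGroup_iff'.mp hH.1.eigenvectorUnitary.2
  have hU2 : U * star U = 1 := Matrix.mem_unitaryGroup_iff.mp hH.1.eigenvectorUnitary.2
  set μ : n → ℝ := hH.1.eigenvalues with hμdef
  have hμ0 : ∀ j, 0 ≤ μ j := hH.eigenvalues_nonneg
  set D : Matrix n n ℂ := Matrix.diagonal (fun j => ((μ j : ℝ) : ℂ)) with hDdef
  have hspec : Aᴴ * A = U * D * star U := hH.1.spectral_theorem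
  have hUHU : star U * (Aᴴ * A) * U = D := by
    rw [hspec]
    simp only [Matrix.mul_assoc]
    rw [← Matrix.mul_assoc (star U) U, hU1, Matrix.one_mul, Matrix.mul_one]
  set Dinv : Matrix n n ℂ := Matrix.diagonal
    (fun j => if μ j = 0 then (0 : ℂ) else (((Real.sqrt (μ j))⁻¹ : ℝ) : ℂ)) with hDinvdef
  have hDinvH : Dinvᴴ = Dinv := by
    have hst : (star fun j => if μ j = 0 then (0 : ℂ) else (((Real.sqrt (μ j))⁻¹ : ℝ) : ℂ))
        = fun j => if μ j = 0 then (0 : ℂ) else (((Real.sqrt (μ j))⁻¹ : ℝ) : ℂ) := by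
      funext j
      by_cases h : μ j = 0 <;> simp [h, Pi.star_apply]
    rw [hDinvdef, Matrix.diagonal_conjTranspose, hst]
  set W : Matrix m n ℂ := A * U * Dinv with hWdef
  have hWH : Wᴴ = Dinv * star U * Aᴴ := by
    rw [hWdef, Matrix.conjTranspose_mul, Matrix.conjTranspose_mul, hDinvH]
    simp [Matrix.star_eq_conjTranspose, Matrix.mul_assoc]
  have hsqrtpos : ∀ j, μ j ≠ 0 → Real.sqrt (μ j) ≠ 0 := fun j h =>
    ne_of_gt (Real.sqrt_pos.mpr (lt_of_le_of_ne (hμ0 j) (Ne.symm h)))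
  -- key identity 1 : Wᴴ * A * U = diagonal √μ
  have k1 : Wᴴ * A * U = Matrix.diagonal (fun j => ((Real.sqrt (μ j) : ℝ) : ℂ)) := by
    rw [hWH]
    have h1 : Dinv * star U * Aᴴ * A * U = Dinv * (star U * (Aᴴ * A) * U) := by
      simp only [Matrix.mul_assoc]
    rw [h1, hUHU, hDdef, hDinvdef, Matrix.diagonal_mul_diagonal]
    refine congrArg Matrix.diagonal (funext fun j => ?_)
    by_cases h : μ j = 0
    · simp [h]
    · have hs := hsqrtpos j h
      have heq : (Real.sqrt (μ j))⁻¹ * μ j = Real.sqrt (μ j) := by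
        rw [inv_mul_eq_div, div_eq_iff hs]
        exact (Real.mul_self_sqrt (hμ0 j)).symm
      simp only [h, if_false]
      rw [← Complex.ofReal_mul, heq]
  -- key identity 2 : Wᴴ * W = diagonal of 0/1
  set Eproj : Matrix n n ℂ := Matrix.diagonal (fun j => if μ j = 0 then (0:ℂ) else 1)
    with hEdef
  have k2 : Wᴴ * W = Eproj := by
    rw [hWH, hWdef]
    have h1 : Dinv * star U * Aᴴ * (A * U * Dinv) = Dinv * (star U * (Aᴴ * A) * U) * Dinv := by
      simp only [Matrix.mul_assoc]
    rw [h1, hUHU, hDdef, hDinvdef, hEdef, Matrix.diagonal_mul_diagonal,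
      Matrix.diagonal_mul_diagonal]
    refine congrArg Matrix.diagonal (funext fun j => ?_)
    by_cases h : μ j = 0
    · simp [h]
    · have hs := hsqrtpos j h
      have heq : (Real.sqrt (μ j))⁻¹ * μ j * (Real.sqrt (μ j))⁻¹ = 1 := by
        have h2 : μ j = Real.sqrt (μ j) * Real.sqrt (μ j) := (Real.mul_self_sqrt (hμ0 j)).symm
        rw [h2]
        field_simp
        rw [Real.sqrt_sq (Real.sqrt_nonneg _)]
      simp only [h, if_false]
      rw [← Complex.ofReal_mul, ← Complex.ofReal_mul, heq, Complex.ofReal_one]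
  have hDE : Dinv * Eproj = Dinv := by
    rw [hDinvdef, hEdef, Matrix.diagonal_mul_diagonal]
    refine congrArg Matrix.diagonal (funext fun j => ?_)
    by_cases h : μ j = 0 <;> simp [h]
  have hWE : W * Eproj = W := by
    rw [hWdef, Matrix.mul_assoc (A * U) Dinv Eproj, hDE]
  set Pr : Matrix m m ℂ := W * Wᴴ with hPrdef
  have hPr2 : Pr * Pr = Pr := by
    rw [hPrdef]
    calc W * Wᴴ * (W * Wᴴ) = W * (Wᴴ * W) * Wᴴ := by simp only [Matrix.mul_assoc]
    _ = W * Eproj * Wᴴ := by rw [k2]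
    _ = W * Wᴴ := by rw [hWE]
  have hPrH : Prᴴ = Pr := by
    rw [hPrdef, Matrix.conjTranspose_mul, Matrix.conjTranspose_conjTranspose]
  set G : Matrix m m ℂ := 1 - Pr with hGdef
  have hGH : Gᴴ = G := by
    rw [hGdef, Matrix.conjTranspose_sub, hPrH, Matrix.conjTranspose_one]
  have hGG : Gᴴ * G = G := by
    rw [hGH, hGdef]
    simp only [Matrix.sub_mul, Matrix.mul_sub, Matrix.one_mul, Matrix.mul_one, hPr2]
    abel
  -- trace identities
  set P : Matrix K n ℂ := Xᴴ * W with hPdef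
  set Rm : Matrix K n ℂ := Yᴴ * U with hRmdef
  have hPH : Pᴴ = Wᴴ * X := by
    rw [hPdef, Matrix.conjTranspose_mul, Matrix.conjTranspose_conjTranspose]
  have htraceval : (Wᴴ * A * U) = Pᴴ * Rm := by
    rw [hPH, hRmdef, hAdef]
    simp only [Matrix.mul_assoc]
  -- traceNorm = Σ √μ
  have hsqrt : traceNorm A
      = (U * Matrix.diagonal (fun j => ((Real.sqrt (μ j) : ℝ) : ℂ)) * star U).trace.re := by
    rfl
  have htn2 : traceNorm A = ((Pᴴ * Rm).trace).re := by
    rw [hsqrt, Matrix.trace_mul_cycle, hU1, Matrix.one_mul, ← htraceval, k1]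
  -- entrywise bound
  have hentry : ((Pᴴ * Rm).trace).re ≤
      ∑ q : K × n, ‖P q.1 q.2‖ * ‖Rm q.1 q.2‖ := by
    have h1 : ((Pᴴ * Rm).trace).re = ∑ j, ∑ c, (star (P c j) * Rm c j).re := by
      rw [Matrix.trace]
      rw [Complex.re_sum]
      refine Finset.sum_congr rfl fun j _ => ?_
      rw [Matrix.diag_apply, Matrix.mul_apply, Complex.re_sum]
      refine Finset.sum_congr rfl fun c _ => ?_
      rw [Matrix.conjTranspose_apply]
    rw [h1, Fintype.sum_prod_type_right]
    refine Finset.sum_le_sum fun j _ => Finset.sum_le_sum fun c _ => ?_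
    calc (star (P c j) * Rm c j).re ≤ ‖star (P c j) * Rm c j‖ :=
          Complex.re_le_norm _
    _ = ‖P c j‖ * ‖Rm c j‖ := by
        rw [norm_mul]
        simp
  -- Cauchy-Schwarz
  have hCS : ∑ q : K × n, ‖P q.1 q.2‖ * ‖Rm q.1 q.2‖ ≤
      Real.sqrt (∑ q : K × n, ‖P q.1 q.2‖ ^ 2) *
      Real.sqrt (∑ q : K × n, ‖Rm q.1 q.2‖ ^ 2) := by
    have h := Finset.sum_mul_sq_le_sq_mul_sq Finset.univ
      (fun q : K × n => ‖P q.1 q.2‖) (fun q => ‖Rm q.1 q.2‖)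
    have hnn : 0 ≤ ∑ q : K × n, ‖P q.1 q.2‖ * ‖Rm q.1 q.2‖ :=
      Finset.sum_nonneg fun q _ => mul_nonneg (norm_nonneg _) (norm_nonneg _)
    rw [← Real.sqrt_mul_self hnn, ← Real.sqrt_mul (Finset.sum_nonneg fun q _ => sq_nonneg _)]
    refine Real.sqrt_le_sqrt ?_
    calc _ = (∑ q : K × n, ‖P q.1 q.2‖ * ‖Rm q.1 q.2‖) ^ 2 := (sq _).symm
    _ ≤ _ := h
  -- bounds for the two Frobenius sums
  have hRm2 : ∑ q : K × n, ‖Rm q.1 q.2‖ ^ 2 = ((Y * Yᴴ).trace).re := by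
    have hRR : Rm * Rmᴴ = Yᴴ * Y := by
      rw [hRmdef, Matrix.conjTranspose_mul]
      calc Yᴴ * U * (Uᴴ * Yᴴᴴ) = Yᴴ * (U * star U) * Y := by
            simp [Matrix.star_eq_conjTranspose, Matrix.mul_assoc]
      _ = Yᴴ * Y := by rw [hU2, Matrix.mul_one]
    have h2 : ((Rm * Rmᴴ).trace).re = ∑ c, ∑ j, ‖Rm c j‖ ^ 2 := by
      rw [Matrix.trace, Complex.re_sum]
      refine Finset.sum_congr rfl fun c _ => ?_
      rw [Matrix.diag_apply, Matrix.mul_apply, Complex.re_sum]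
      refine Finset.sum_congr rfl fun j _ => ?_
      rw [Matrix.conjTranspose_apply, Complex.star_def, Complex.mul_conj, Complex.ofReal_re,
        Complex.normSq_eq_norm_sq]
    rw [Fintype.sum_prod_type, ← h2, hRR, Matrix.trace_mul_comm]
  have hP2 : ∑ q : K × n, ‖P q.1 q.2‖ ^ 2 ≤ ((X * Xᴴ).trace).re := by
    have hPP : P * Pᴴ = Xᴴ * Pr * X := by
      rw [hPdef, Matrix.conjTranspose_mul, Matrix.conjTranspose_conjTranspose, hPrdef]
      simp only [Matrix.mul_assoc]
    have h2 : ((P * Pᴴ).trace).re = ∑ c, ∑ j, ‖P c j‖ ^ 2 := by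
      rw [Matrix.trace, Complex.re_sum]
      refine Finset.sum_congr rfl fun c _ => ?_
      rw [Matrix.diag_apply, Matrix.mul_apply, Complex.re_sum]
      refine Finset.sum_congr rfl fun j _ => ?_
      rw [Matrix.conjTranspose_apply, Complex.star_def, Complex.mul_conj, Complex.ofReal_re,
        Complex.normSq_eq_norm_sq]
    have h3 : (Xᴴ * Pr * X).trace = (X * Xᴴ).trace - (Xᴴ * G * X).trace := by
      have : Xᴴ * G * X = Xᴴ * X - Xᴴ * Pr * X := by
        rw [hGdef]
        simp only [Matrix.mul_sub, Matrix.sub_mul, Matrix.mul_one]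
      rw [this, Matrix.trace_sub, Matrix.trace_mul_comm Xᴴ X]
      ring
    have h4 : 0 ≤ ((Xᴴ * G * X).trace).re := by
      have hpsd : (Xᴴ * G * X).PosSemidef := by
        have : Xᴴ * G * X = (G * X)ᴴ * (G * X) := by
          rw [Matrix.conjTranspose_mul]
          calc Xᴴ * G * X = Xᴴ * (Gᴴ * G) * X := by rw [hGG]
          _ = Xᴴ * Gᴴ * (G * X) := by simp only [Matrix.mul_assoc]
        rw [this]
        exact Matrix.posSemidef_conjTranspose_mul_self _
      have := trace_nonneg_of_psd hpsd
      exact (Complex.le_def.mp this).1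
    rw [Fintype.sum_prod_type, ← h2, hPP, h3]
    simp only [Complex.sub_re]
    linarith
  -- combine everything
  rw [htn2]
  calc ((Pᴴ * Rm).trace).re ≤ ∑ q : K × n, ‖P q.1 q.2‖ * ‖Rm q.1 q.2‖ :=
        hentry
  _ ≤ Real.sqrt (∑ q : K × n, ‖P q.1 q.2‖ ^ 2) *
      Real.sqrt (∑ q : K × n, ‖Rm q.1 q.2‖ ^ 2) := hCS
  _ ≤ Real.sqrt ((X * Xᴴ).trace.re) * Real.sqrt ((Y * Yᴴ).trace.re) := by
      rw [hRm2]
      exact mul_le_mul_of_nonneg_right (Real.sqrt_le_sqrt hP2) (Real.sqrt_nonneg _)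

lemma trace_mul_real' {ι : Type*} [Fintype ι] {A B : Matrix ι ι ℂ}
    (hA : A.IsHermitian) (hB : B.IsHermitian) :
    (A * B).trace = (((A * B).trace.re : ℝ) : ℂ) := by
  have h : star ((A * B).trace) = (A * B).trace := by
    rw [← Matrix.trace_conjTranspose, Matrix.conjTranspose_mul, hA, hB, Matrix.trace_mul_comm]
  exact (Complex.conj_eq_iff_re.mp h).symm

lemma trace_sq_of_density' {ι : Type*} [Fintype ι] [DecidableEq ι] {ρ : Matrix ι ι ℂ}
    (hpsd : ρ.PosSemidef) (htr : ρ.trace = 1) :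
    ∃ s : ℝ, (ρ * ρ).trace = (s : ℂ) ∧ 0 ≤ s ∧ s ≤ 1 := by
  have hH := hpsd.1
  set U : Matrix ι ι ℂ := (hH.eigenvectorUnitary : Matrix ι ι ℂ) with hU
  have hUU : star U * U = 1 := Matrix.mem_unitaryGroup_iff'.mp hH.eigenvectorUnitary.2
  set μ := hH.eigenvalues with hμ
  have hspec : ρ = U * Matrix.diagonal (RCLike.ofReal ∘ μ) * star U := hH.spectral_theorem
  have htrd : ∀ (D : Matrix ι ι ℂ), (U * D * star U).trace = D.trace := by
    intro D
    rw [Matrix.trace_mul_cycle, hUU, Matrix.one_mul]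
  have hsum : ∑ i, μ i = 1 := by
    have : ρ.trace = ∑ i, ((μ i : ℝ) : ℂ) := by
      rw [hspec, htrd, Matrix.trace_diagonal]
      rfl
    rw [htr] at this
    have := this.symm
    rw [← Complex.ofReal_sum] at this
    exact_mod_cast this
  have hnonneg : ∀ i, 0 ≤ μ i := hpsd.eigenvalues_nonneg
  refine ⟨∑ i, (μ i) ^ 2, ?_, ?_, ?_⟩
  · have : ρ * ρ = U * (Matrix.diagonal (RCLike.ofReal ∘ μ) * Matrix.diagonal (RCLike.ofReal ∘ μ)) * star U := by
      conv_lhs => rw [hspec]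
      simp only [Matrix.mul_assoc]
      rw [← Matrix.mul_assoc (star U) U _, hUU, Matrix.one_mul]
    rw [this, htrd, Matrix.diagonal_mul_diagonal, Matrix.trace_diagonal]
    push_cast
    ring_nf
    rfl
  · positivity
  · calc ∑ i, (μ i) ^ 2 ≤ ∑ i, μ i * 1 := by
          apply Finset.sum_le_sum
          intro i _
          have hle : μ i ≤ 1 := by
            rw [← hsum]
            exact Finset.single_le_sum (fun j _ => hnonneg j) (Finset.mem_univ i)
          nlinarith [hnonneg i]
       _ = 1 := by simp [hsum]

lemma final_algebra (dr Mr x Nr : ℝ) (hd : dr ≠ 0) (hM : Mr ≠ 0) (hM1 : Mr - 1 ≠ 0)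
    (hN : Nr = (dr ^ 2 - 1) / (Mr - 1)) :
    (x - dr / Mr ^ 2) * Mr / (Mr - 1) * (1 - 1 / dr) + Nr / Mr
      = (dr - 1) * (Mr ^ 2 * x + dr ^ 2) / (dr * Mr * (Mr - 1)) := by
  rw [hN]
  field_simp
  ring

set_option maxHeartbeats 1000000 in

set_option maxHeartbeats 1000000 in
lemma povm_sum_sq_le (d N M : ℕ) (x : ℝ)
    (E : Fin N → Fin M → Matrix (Fin d) (Fin d) ℂ)
    (hE : IsNMPOVM d N M x E) (hIC : IsInfoComplete d N M)
    {σ : Matrix (Fin d) (Fin d) ℂ} (hσ : IsDensityMatrix σ) :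
    ∑ p : Fin N × Fin M, ((E p.1 p.2 * σ).trace.re) ^ 2 ≤
      ((d : ℝ) - 1) * ((M : ℝ) ^ 2 * x + (d : ℝ) ^ 2) / ((d : ℝ) * M * ((M : ℝ) - 1)) := by
  classical
  obtain ⟨hpsd, hsum1, htrE, htrEE, htrkl, htrab, hxlo, hxhi⟩ := hE
  -- basic size facts
  have hM2 : 2 ≤ M := by
    by_contra hM
    push_neg at hM
    interval_cases M
    · norm_num at hxlo hxhi
      linarith
    · norm_num at hxlo hxhi
      rcases hxhi with ⟨h1, h2⟩
      linarith
  have hd2 : 2 ≤ d := by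
    by_contra hd
    push_neg at hd
    interval_cases d
    · norm_num at hxlo hxhi
      linarith
    · norm_num at hxlo hxhi
      rcases hxhi with ⟨h1, h2⟩
      linarith
  have hMr : (2:ℝ) ≤ (M:ℝ) := by exact_mod_cast hM2
  have hdr : (2:ℝ) ≤ (d:ℝ) := by exact_mod_cast hd2
  have hM0 : (M:ℝ) ≠ 0 := by linarith
  have hM1 : (M:ℝ) - 1 ≠ 0 := by linarith
  have hd0 : (d:ℝ) ≠ 0 := by linarith
  have hd1 : (d:ℝ) - 1 ≠ 0 := by linarith
  have hσH : σ.IsHermitian := hσ.1.1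
  -- the real-valued probabilities
  set t : Fin N × Fin M → ℝ := fun p => ((E p.1 p.2 * σ).trace).re with htdef
  have ht : ∀ p : Fin N × Fin M, (E p.1 p.2 * σ).trace = ((t p : ℝ) : ℂ) :=
    fun p => trace_mul_real' (hpsd p.1 p.2).1 hσH
  have hrow : ∀ α, ∑ k, t (α, k) = 1 := by
    intro α
    have h1 : ∑ k, (E α k * σ).trace = (1 : ℂ) := by
      rw [← Matrix.trace_sum, ← Matrix.sum_mul, hsum1 α, Matrix.one_mul, hσ.2]
    rw [Finset.sum_congr rfl (fun k _ => ht (α, k)), ← Complex.ofReal_sum] at h1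
    exact_mod_cast h1
  set r : Fin N × Fin M → ℝ := fun p => t p - 1 / M with hrdef
  have hrrow : ∀ α, ∑ k, r (α, k) = 0 := by
    intro α
    rw [hrdef]
    simp only [Finset.sum_sub_distrib, hrow α, Finset.sum_const, Finset.card_univ,
      Fintype.card_fin, nsmul_eq_mul]
    field_simp
    norm_num
  have hrall : ∑ p : Fin N × Fin M, r p = 0 := by
    rw [Fintype.sum_prod_type]
    simp [hrrow]
  set R : ℝ := ∑ p : Fin N × Fin M, r p ^ 2 with hRdef
  have hR0 : 0 ≤ R := Finset.sum_nonneg fun p _ => sq_nonneg _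
  -- the matrices X and Z
  set X : Matrix (Fin d) (Fin d) ℂ := σ - ((1 / d : ℝ) : ℂ) • 1 with hXdef
  set Z : Matrix (Fin d) (Fin d) ℂ := ∑ p : Fin N × Fin M, ((r p : ℝ) : ℂ) • E p.1 p.2
    with hZdef
  -- trace of E_p * X
  have hEX : ∀ p : Fin N × Fin M, (E p.1 p.2 * X).trace = ((r p : ℝ) : ℂ) := by
    intro p
    rw [hXdef, Matrix.mul_sub, Matrix.trace_sub, Matrix.mul_smul, Matrix.mul_one,
      Matrix.trace_smul, ht p, htrE p.1 p.2, hrdef]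
    rw [smul_eq_mul, ← Complex.ofReal_mul, ← Complex.ofReal_sub]
    congr 1
    field_simp
  have hZX : (Z * X).trace = ((R : ℝ) : ℂ) := by
    rw [hZdef, Matrix.sum_mul, Matrix.trace_sum]
    rw [Finset.sum_congr rfl (fun p _ => by
      rw [Matrix.smul_mul, Matrix.trace_smul, hEX p, smul_eq_mul, ← Complex.ofReal_mul])]
    rw [← Complex.ofReal_sum, hRdef]
    exact congrArg _ (Finset.sum_congr rfl fun p _ => (pow_two (r p)).symm)
  have hXZ : (X * Z).trace = ((R : ℝ) : ℂ) := by rw [Matrix.trace_mul_comm, hZX]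
  obtain ⟨s, hs, hs0, hs1⟩ := trace_sq_of_density' hσ.1 hσ.2
  have hXX : (X * X).trace = ((s - 1 / d : ℝ) : ℂ) := by
    rw [hXdef]
    simp only [Matrix.sub_mul, Matrix.mul_sub, Matrix.smul_mul, Matrix.mul_smul,
      Matrix.mul_one, Matrix.one_mul, Matrix.trace_sub, Matrix.trace_smul, smul_smul,
      smul_eq_mul, Matrix.trace_one]
    rw [hs, hσ.2, Fintype.card_fin]
    push_cast
    field_simp
    ring
  -- the Gram values
  set c0 : ℝ := x - (d:ℝ) / M ^ 2 with hc0def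
  set c1 : ℝ := ((d:ℝ) - M * x) / (M * ((M:ℝ) - 1)) - (d:ℝ) / M ^ 2 with hc1def
  set lam : ℝ := (x - (d:ℝ) / M ^ 2) * M / ((M:ℝ) - 1) with hlamdef
  have hc01 : c0 - c1 = lam := by
    rw [hc0def, hc1def, hlamdef]
    field_simp
    ring
  have hlam : 0 < lam := by
    rw [hlamdef]
    apply div_pos
    · apply mul_pos
      · linarith
      · linarith
    · linarith
  set gv : Fin N × Fin M → Fin N × Fin M → ℝ := fun p q =>
    (d:ℝ) / M ^ 2 + (if p.1 = q.1 then (if p.2 = q.2 then c0 else c1) else 0) with hgvdef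
  have hgval : ∀ p q : Fin N × Fin M,
      (E p.1 p.2 * E q.1 q.2).trace = ((gv p q : ℝ) : ℂ) := by
    intro p q
    rw [hgvdef]
    by_cases hα : p.1 = q.1
    · by_cases hk : p.2 = q.2
      · have hpq : p = q := Prod.ext hα hk
        subst hpq
        rw [htrEE p.1 p.2]
        simp only [if_pos rfl]
        rw [hc0def]
        push_cast
        ring_nf
      · rw [← hα, htrkl p.1 p.2 q.2 (by simpa [← hα] using hk)]
        simp only [hα, if_pos rfl, if_neg hk]
        rw [hc1def]
        push_cast
        ring_nf
    · rw [htrab p.1 q.1 p.2 q.2 hα]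
      simp only [if_neg hα]
      push_cast
      ring_nf
  -- trace of Z * Z
  have hZZ : (Z * Z).trace = (((c0 - c1) * R : ℝ) : ℂ) := by
    have h1 : (Z * Z).trace = ∑ p : Fin N × Fin M, ∑ q : Fin N × Fin M,
        ((r p * r q * gv p q : ℝ) : ℂ) := by
      rw [hZdef, Finset.sum_mul_sum, Matrix.trace_sum]
      refine Finset.sum_congr rfl fun p _ => ?_
      rw [Matrix.trace_sum]
      refine Finset.sum_congr rfl fun q _ => ?_
      rw [Matrix.smul_mul, Matrix.mul_smul, Matrix.trace_smul, Matrix.trace_smul, hgval p q]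
      rw [smul_eq_mul, smul_eq_mul]
      push_cast
      ring
    rw [h1]
    rw [show (∑ p : Fin N × Fin M, ∑ q : Fin N × Fin M, ((r p * r q * gv p q : ℝ) : ℂ))
        = (((∑ p : Fin N × Fin M, ∑ q : Fin N × Fin M, r p * r q * gv p q : ℝ)) : ℂ) by
      push_cast; rfl]
    congr 1
    -- now a purely real computation
    have hsplit : ∀ p q : Fin N × Fin M, r p * r q * gv p q =
        r p * ((d:ℝ) / M ^ 2) * r q +
        r p * r q * (if p.1 = q.1 then (if p.2 = q.2 then c0 else c1) else 0) := by
      intro p q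
      rw [hgvdef]
      ring
    rw [Finset.sum_congr rfl fun p _ => Finset.sum_congr rfl fun q _ => hsplit p q]
    rw [Finset.sum_congr rfl fun p _ => Finset.sum_add_distrib, Finset.sum_add_distrib]
    have hS1 : ∑ p : Fin N × Fin M, ∑ q : Fin N × Fin M,
        r p * ((d:ℝ) / M ^ 2) * r q = 0 := by
      have : ∀ p : Fin N × Fin M, ∑ q : Fin N × Fin M, r p * ((d:ℝ) / M ^ 2) * r q = 0 := by
        intro p
        rw [← Finset.mul_sum, hrall, mul_zero]
      rw [Finset.sum_congr rfl fun p _ => this p, Finset.sum_const, smul_zero]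
    rw [hS1, zero_add]
    -- the correlated part
    have hS2 : ∀ α : Fin N, ∀ k : Fin M, ∑ q : Fin N × Fin M,
        r (α, k) * r q * (if (α, k).1 = q.1 then (if (α, k).2 = q.2 then c0 else c1) else 0)
        = r (α, k) ^ 2 * (c0 - c1) := by
      intro α k
      rw [Fintype.sum_prod_type]
      have houter : ∀ β ∈ (Finset.univ : Finset (Fin N)), β ≠ α →
          (∑ l, r (α, k) * r (β, l) *
            (if (α, k).1 = (β, l).1 then (if (α, k).2 = (β, l).2 then c0 else c1) else 0)) = 0 := by
        intro β _ hβ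
        apply Finset.sum_eq_zero
        intro l _
        rw [if_neg (show ¬((α, k).1 = (β, l).1) from fun h => hβ (Eq.symm h))]
        ring
      rw [Finset.sum_eq_single α houter (by simp)]
      have hinner : ∀ l : Fin M,
          r (α, k) * r (α, l) * (if (α, k).1 = (α, l).1 then
            (if (α, k).2 = (α, l).2 then c0 else c1) else 0)
          = r (α, k) * r (α, l) * c1 +
            (if k = l then r (α, k) * r (α, l) * (c0 - c1) else 0) := by
        intro l
        by_cases hkl : k = l
        · subst hkl
          rw [if_pos rfl, if_pos rfl, if_pos rfl]
          ring
        · rw [if_pos rfl, if_neg hkl, if_neg hkl]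
          ring
      rw [Finset.sum_congr rfl fun l _ => hinner l, Finset.sum_add_distrib]
      rw [show (∑ l, r (α, k) * r (α, l) * c1) = r (α, k) * c1 * ∑ l, r (α, l) from by
        rw [Finset.mul_sum]; exact Finset.sum_congr rfl fun l _ => by ring]
      rw [hrrow α, mul_zero, zero_add]
      rw [Finset.sum_ite_eq Finset.univ k (fun l => r (α, k) * r (α, l) * (c0 - c1))]
      rw [if_pos (Finset.mem_univ k)]
      ring
    rw [Fintype.sum_prod_type]
    rw [Finset.sum_congr rfl fun α _ => Finset.sum_congr rfl fun k _ => hS2 α k]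
    rw [hRdef, Fintype.sum_prod_type, Finset.mul_sum]
    refine Finset.sum_congr rfl fun α _ => ?_
    rw [Finset.mul_sum]
    exact Finset.sum_congr rfl fun k _ => mul_comm _ _
  -- Hermitian structure
  have hZH : Zᴴ = Z := by
    rw [hZdef, Matrix.conjTranspose_sum]
    refine Finset.sum_congr rfl fun p _ => ?_
    rw [Matrix.conjTranspose_smul, (hpsd p.1 p.2).1, Complex.star_def, Complex.conj_ofReal]
  have hXH : Xᴴ = X := by
    rw [hXdef, Matrix.conjTranspose_sub, hσH, Matrix.conjTranspose_smul,
      Matrix.conjTranspose_one, Complex.star_def, Complex.conj_ofReal]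
  set B : Matrix (Fin d) (Fin d) ℂ := Z - ((lam : ℝ) : ℂ) • X with hBdef
  have hBH : Bᴴ = B := by
    rw [hBdef, Matrix.conjTranspose_sub, hZH, Matrix.conjTranspose_smul, hXH,
      Complex.star_def, Complex.conj_ofReal]
  have hBB : 0 ≤ (B * B).trace := by
    have : B * B = Bᴴ * B := by rw [hBH]
    rw [this]
    exact trace_nonneg_of_psd (Matrix.posSemidef_conjTranspose_mul_self B)
  have hBBval : (B * B).trace = ((lam * lam * (s - 1 / d) - lam * R : ℝ) : ℂ) := by
    rw [hBdef]
    simp only [Matrix.sub_mul, Matrix.mul_sub, Matrix.smul_mul, Matrix.mul_smul, smul_smul,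
      Matrix.trace_sub, Matrix.trace_smul, smul_eq_mul]
    rw [hZZ, hZX, hXZ, hXX, hc01]
    push_cast
    ring
  have hkey : 0 ≤ lam * lam * (s - 1 / d) - lam * R := by
    rw [hBBval] at hBB
    exact_mod_cast hBB
  have hRle : R ≤ lam * (1 - 1 / (d:ℝ)) := by
    have h1 : R ≤ lam * (s - 1 / d) := by
      have := mul_le_mul_of_nonneg_left (le_refl lam) (le_of_lt hlam)
      nlinarith [hlam]
    have h2 : lam * (s - 1 / d) ≤ lam * (1 - 1 / d) := by
      apply mul_le_mul_of_nonneg_left _ (le_of_lt hlam)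
      linarith
    linarith
  -- expand the target sum
  have hT : ∑ p : Fin N × Fin M, (t p) ^ 2 = R + (N : ℝ) / M := by
    have h1 : ∀ p : Fin N × Fin M, (t p) ^ 2 = r p ^ 2 + 2 / M * r p + 1 / M ^ 2 := by
      intro p
      have : t p = r p + 1 / M := by rw [hrdef]; ring
      rw [this]
      field_simp
      ring
    rw [Finset.sum_congr rfl fun p _ => h1 p, Finset.sum_add_distrib, Finset.sum_add_distrib]
    rw [← Finset.mul_sum, hrall, mul_zero, add_zero, Finset.sum_const, Finset.card_univ]
    rw [Fintype.card_prod, Fintype.card_fin, Fintype.card_fin, nsmul_eq_mul, hRdef]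
    push_cast
    field_simp
  -- final algebra
  have hN : (N : ℝ) = ((d:ℝ) ^ 2 - 1) / ((M:ℝ) - 1) := by
    unfold IsInfoComplete at hIC
    field_simp
    linarith
  have hfin : lam * (1 - 1 / (d:ℝ)) + (N : ℝ) / M
      = ((d : ℝ) - 1) * ((M : ℝ) ^ 2 * x + (d : ℝ) ^ 2) / ((d : ℝ) * M * ((M : ℝ) - 1)) := by
    rw [hlamdef]
    exact final_algebra _ _ _ _ hd0 hM0 hM1 hN
  calc ∑ p : Fin N × Fin M, ((E p.1 p.2 * σ).trace.re) ^ 2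
      = ∑ p : Fin N × Fin M, (t p) ^ 2 := by rw [htdef]
    _ = R + (N : ℝ) / M := hT
    _ ≤ lam * (1 - 1 / (d:ℝ)) + (N : ℝ) / M := by linarith
    _ = _ := hfin


/-- Theorem 1 of the paper: for a separable bipartite state ρ_AB,
arbitrary real vectors a, b, and informationally complete (N_A,M_A)- and
(N_B,M_B)-POVMs on the two subsystems,
‖Q_{a,b}(ρ_AB)‖_tr ≤ √(|a|² + (d_A−1)(M_A²x_A + d_A²)/(d_A M_A(M_A−1))) ·
√(|b|² + (d_B−1)(M_B²x_B + d_B²)/(d_B M_B(M_B−1))). -/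
theorem separability_criterion_NM_POVM
    (dA dB NA MA NB MB m n : ℕ) (xA xB : ℝ)
    (EA : Fin NA → Fin MA → Matrix (Fin dA) (Fin dA) ℂ)
    (EB : Fin NB → Fin MB → Matrix (Fin dB) (Fin dB) ℂ)
    (hEA : IsNMPOVM dA NA MA xA EA) (hICA : IsInfoComplete dA NA MA)
    (hEB : IsNMPOVM dB NB MB xB EB) (hICB : IsInfoComplete dB NB MB)
    (a : Fin m → ℝ) (b : Fin n → ℝ)
    (ρ : Matrix (Fin dA × Fin dB) (Fin dA × Fin dB) ℂ)
    (hρ : IsDensityMatrix ρ) (hsep : SeparableState ρ) :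
    traceNorm (Matrix.fromBlocks
      (Matrix.of fun (i : Fin m) (j : Fin n) => ((a i : ℂ) * (b j : ℂ)))
      (Matrix.of fun (i : Fin m) (q : Fin NB × Fin MB) =>
        (a i : ℂ) * (EB q.1 q.2 * ptraceA ρ).trace)
      (Matrix.of fun (p : Fin NA × Fin MA) (j : Fin n) =>
        (EA p.1 p.2 * ptraceB ρ).trace * (b j : ℂ))
      (Matrix.of fun (p : Fin NA × Fin MA) (q : Fin NB × Fin MB) =>
        ((EA p.1 p.2 ⊗ₖ EB q.1 q.2) * ρ).trace)) ≤
    Real.sqrt (∑ i, a i ^ 2 +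
        ((dA : ℝ) - 1) * ((MA : ℝ) ^ 2 * xA + (dA : ℝ) ^ 2) /
          ((dA : ℝ) * MA * ((MA : ℝ) - 1))) *
    Real.sqrt (∑ j, b j ^ 2 +
        ((dB : ℝ) - 1) * ((MB : ℝ) ^ 2 * xB + (dB : ℝ) ^ 2) /
          ((dB : ℝ) * MB * ((MB : ℝ) - 1))) := by
  classical
  obtain ⟨K, p, ρA, ρB, hp0, hp1, hdA, hdB, hρeq⟩ := hsep
  set cA : ℝ := ((dA : ℝ) - 1) * ((MA : ℝ) ^ 2 * xA + (dA : ℝ) ^ 2) /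
      ((dA : ℝ) * MA * ((MA : ℝ) - 1)) with hcAdef
  set cB : ℝ := ((dB : ℝ) - 1) * ((MB : ℝ) ^ 2 * xB + (dB : ℝ) ^ 2) /
      ((dB : ℝ) * MB * ((MB : ℝ) - 1)) with hcBdef
  set tA : Fin K → Fin NA × Fin MA → ℝ := fun i q => ((EA q.1 q.2 * ρA i).trace).re with htAdef
  set tB : Fin K → Fin NB × Fin MB → ℝ := fun i q => ((EB q.1 q.2 * ρB i).trace).re with htBdef
  have htA : ∀ i q, (EA q.1 q.2 * ρA i).trace = ((tA i q : ℝ) : ℂ) :=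
    fun i q => trace_mul_real' (hEA.1 q.1 q.2).1 (hdA i).1.1
  have htB : ∀ i q, (EB q.1 q.2 * ρB i).trace = ((tB i q : ℝ) : ℂ) :=
    fun i q => trace_mul_real' (hEB.1 q.1 q.2).1 (hdB i).1.1
  set u : Fin K → (Fin m ⊕ Fin NA × Fin MA) → ℝ := fun i => Sum.elim a (tA i) with hudef
  set v : Fin K → (Fin n ⊕ Fin NB × Fin MB) → ℝ := fun i => Sum.elim b (tB i) with hvdef
  set X : Matrix (Fin m ⊕ Fin NA × Fin MA) (Fin K) ℂ :=
    Matrix.of fun rr i => ((Real.sqrt (p i) * u i rr : ℝ) : ℂ) with hXdef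
  set Y : Matrix (Fin n ⊕ Fin NB × Fin MB) (Fin K) ℂ :=
    Matrix.of fun ss i => ((Real.sqrt (p i) * v i ss : ℝ) : ℂ) with hYdef
  -- partial traces of the separable state
  have hptB : ptraceB ρ = ∑ i, (p i : ℂ) • ρA i := by
    rw [hρeq]
    ext i j
    rw [ptraceB, Matrix.of_apply]
    rw [Finset.sum_congr rfl fun k _ => by
      rw [Matrix.sum_apply, Finset.sum_congr rfl fun i' _ => by
        rw [Matrix.smul_apply, Matrix.kroneckerMap_apply, smul_eq_mul]]]
    rw [Finset.sum_comm]
    rw [Matrix.sum_apply]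
    refine Finset.sum_congr rfl fun i' _ => ?_
    rw [Matrix.smul_apply, smul_eq_mul, ← Finset.mul_sum]
    congr 1
    show (∑ k, ρA i' i j * ρB i' k k) = ρA i' i j
    rw [← Finset.mul_sum, show (∑ k, ρB i' k k) = (1 : ℂ) from (hdB i').2, mul_one]
  have hptA : ptraceA ρ = ∑ i, (p i : ℂ) • ρB i := by
    rw [hρeq]
    ext i j
    rw [ptraceA, Matrix.of_apply]
    rw [Finset.sum_congr rfl fun k _ => by
      rw [Matrix.sum_apply, Finset.sum_congr rfl fun i' _ => by
        rw [Matrix.smul_apply, Matrix.kroneckerMap_apply, smul_eq_mul]]]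
    rw [Finset.sum_comm]
    rw [Matrix.sum_apply]
    refine Finset.sum_congr rfl fun i' _ => ?_
    rw [Matrix.smul_apply, smul_eq_mul, ← Finset.mul_sum]
    congr 1
    show (∑ k, ρA i' k k * ρB i' i j) = ρB i' i j
    rw [← Finset.sum_mul, show (∑ k, ρA i' k k) = (1 : ℂ) from (hdA i').2, one_mul]
  -- the matrix identity Q = X * Yᴴ
  have hXY : ∀ rr ss, (X * Yᴴ) rr ss = ∑ i, (p i : ℂ) * ((u i rr : ℝ) : ℂ) * ((v i ss : ℝ) : ℂ) := by
    intro rr ss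
    rw [Matrix.mul_apply]
    refine Finset.sum_congr rfl fun i _ => ?_
    rw [Matrix.conjTranspose_apply, hXdef, hYdef, Matrix.of_apply, Matrix.of_apply,
      Complex.star_def, Complex.conj_ofReal, ← Complex.ofReal_mul]
    rw [show Real.sqrt (p i) * u i rr * (Real.sqrt (p i) * v i ss)
        = (Real.sqrt (p i) * Real.sqrt (p i)) * (u i rr * v i ss) from by ring,
      Real.mul_self_sqrt (hp0 i)]
    push_cast
    ring
  have hp1C : (∑ i, (p i : ℂ)) = 1 := by
    rw [← Complex.ofReal_sum, hp1, Complex.ofReal_one]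
  have hQXY : (Matrix.fromBlocks
      (Matrix.of fun (i : Fin m) (j : Fin n) => ((a i : ℂ) * (b j : ℂ)))
      (Matrix.of fun (i : Fin m) (q : Fin NB × Fin MB) =>
        (a i : ℂ) * (EB q.1 q.2 * ptraceA ρ).trace)
      (Matrix.of fun (p : Fin NA × Fin MA) (j : Fin n) =>
        (EA p.1 p.2 * ptraceB ρ).trace * (b j : ℂ))
      (Matrix.of fun (p : Fin NA × Fin MA) (q : Fin NB × Fin MB) =>
        ((EA p.1 p.2 ⊗ₖ EB q.1 q.2) * ρ).trace)) = X * Yᴴ := by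
    ext rr ss
    rcases rr with r | qA <;> rcases ss with s | qB
    · rw [Matrix.fromBlocks_apply₁₁, hXY, Matrix.of_apply]
      rw [Finset.sum_congr rfl fun i _ => by
        rw [show u i (Sum.inl r) = a r from rfl, show v i (Sum.inl s) = b s from rfl]]
      rw [← Finset.sum_mul, ← Finset.sum_mul, hp1C, one_mul]
    · rw [Matrix.fromBlocks_apply₁₂, hXY, Matrix.of_apply]
      rw [hptA, Matrix.mul_sum, Matrix.trace_sum]
      rw [Finset.mul_sum]
      refine Finset.sum_congr rfl fun i _ => ?_
      rw [Matrix.mul_smul, Matrix.trace_smul, smul_eq_mul, htB i qB]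
      rw [show u i (Sum.inl r) = a r from rfl, show v i (Sum.inr qB) = tB i qB from rfl]
      ring
    · rw [Matrix.fromBlocks_apply₂₁, hXY, Matrix.of_apply]
      rw [hptB, Matrix.mul_sum, Matrix.trace_sum]
      rw [Finset.sum_mul]
      refine Finset.sum_congr rfl fun i _ => ?_
      rw [Matrix.mul_smul, Matrix.trace_smul, smul_eq_mul, htA i qA]
      rw [show u i (Sum.inr qA) = tA i qA from rfl, show v i (Sum.inl s) = b s from rfl]
    · rw [Matrix.fromBlocks_apply₂₂, hXY, Matrix.of_apply]
      rw [hρeq, Matrix.mul_sum, Matrix.trace_sum]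
      refine Finset.sum_congr rfl fun i _ => ?_
      rw [Matrix.mul_smul, Matrix.trace_smul, smul_eq_mul]
      rw [← Matrix.mul_kronecker_mul, Matrix.trace_kronecker, htA i qA, htB i qB]
      rw [show u i (Sum.inr qA) = tA i qA from rfl, show v i (Sum.inr qB) = tB i qB from rfl]
      ring
  rw [hQXY]
  refine (traceNorm_mul_conjTranspose_le X Y).trans ?_
  have hXXv : (X * Xᴴ).trace = ((∑ i, p i * (∑ rr, (u i rr) ^ 2) : ℝ) : ℂ) := by
    rw [Matrix.trace]
    have h1 : ∀ rr, (X * Xᴴ).diag rr = ((∑ i, p i * (u i rr) ^ 2 : ℝ) : ℂ) := by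
      intro rr
      rw [Matrix.diag_apply, Matrix.mul_apply]
      have hterm : ∀ i, X rr i * Xᴴ i rr = ((p i * (u i rr) ^ 2 : ℝ) : ℂ) := by
        intro i
        rw [Matrix.conjTranspose_apply, hXdef]
        simp only [Matrix.of_apply]
        rw [Complex.star_def, Complex.conj_ofReal, ← Complex.ofReal_mul]
        congr 1
        rw [show Real.sqrt (p i) * u i rr * (Real.sqrt (p i) * u i rr)
            = (Real.sqrt (p i) * Real.sqrt (p i)) * (u i rr) ^ 2 from by ring,
          Real.mul_self_sqrt (hp0 i)]
      rw [Finset.sum_congr rfl fun i _ => hterm i, ← Complex.ofReal_sum]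
    rw [Finset.sum_congr rfl fun rr _ => h1 rr, ← Complex.ofReal_sum]
    congr 1
    rw [Finset.sum_comm]
    exact Finset.sum_congr rfl fun i _ => (Finset.mul_sum _ _ _).symm
  have hYYv : (Y * Yᴴ).trace = ((∑ i, p i * (∑ ss, (v i ss) ^ 2) : ℝ) : ℂ) := by
    rw [Matrix.trace]
    have h1 : ∀ ss, (Y * Yᴴ).diag ss = ((∑ i, p i * (v i ss) ^ 2 : ℝ) : ℂ) := by
      intro ss
      rw [Matrix.diag_apply, Matrix.mul_apply]
      have hterm : ∀ i, Y ss i * Yᴴ i ss = ((p i * (v i ss) ^ 2 : ℝ) : ℂ) := by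
        intro i
        rw [Matrix.conjTranspose_apply, hYdef]
        simp only [Matrix.of_apply]
        rw [Complex.star_def, Complex.conj_ofReal, ← Complex.ofReal_mul]
        congr 1
        rw [show Real.sqrt (p i) * v i ss * (Real.sqrt (p i) * v i ss)
            = (Real.sqrt (p i) * Real.sqrt (p i)) * (v i ss) ^ 2 from by ring,
          Real.mul_self_sqrt (hp0 i)]
      rw [Finset.sum_congr rfl fun i _ => hterm i, ← Complex.ofReal_sum]
    rw [Finset.sum_congr rfl fun ss _ => h1 ss, ← Complex.ofReal_sum]
    congr 1
    rw [Finset.sum_comm]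
    exact Finset.sum_congr rfl fun i _ => (Finset.mul_sum _ _ _).symm
  have hXXle : (X * Xᴴ).trace.re ≤ ∑ r, a r ^ 2 + cA := by
    rw [hXXv, Complex.ofReal_re]
    have hband : ∀ i, (∑ rr, (u i rr) ^ 2) ≤ ∑ r, a r ^ 2 + cA := by
      intro i
      rw [Fintype.sum_sum_type]
      have h1 : ∑ r : Fin m, (u i (Sum.inl r)) ^ 2 = ∑ r, a r ^ 2 := rfl
      have h2 : ∑ q : Fin NA × Fin MA, (u i (Sum.inr q)) ^ 2 ≤ cA := by
        have h3 := povm_sum_sq_le dA NA MA xA EA hEA hICA (hdA i)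
        rw [hcAdef]
        exact h3
      linarith
    calc ∑ i, p i * (∑ rr, (u i rr) ^ 2) ≤ ∑ i, p i * (∑ r, a r ^ 2 + cA) :=
          Finset.sum_le_sum fun i _ => mul_le_mul_of_nonneg_left (hband i) (hp0 i)
    _ = (∑ i, p i) * (∑ r, a r ^ 2 + cA) := by rw [← Finset.sum_mul]
    _ = ∑ r, a r ^ 2 + cA := by rw [hp1, one_mul]
  have hYYle : (Y * Yᴴ).trace.re ≤ ∑ s, b s ^ 2 + cB := by
    rw [hYYv, Complex.ofReal_re]
    have hband : ∀ i, (∑ ss, (v i ss) ^ 2) ≤ ∑ s, b s ^ 2 + cB := by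
      intro i
      rw [Fintype.sum_sum_type]
      have h1 : ∑ s : Fin n, (v i (Sum.inl s)) ^ 2 = ∑ s, b s ^ 2 := rfl
      have h2 : ∑ q : Fin NB × Fin MB, (v i (Sum.inr q)) ^ 2 ≤ cB := by
        have h3 := povm_sum_sq_le dB NB MB xB EB hEB hICB (hdB i)
        rw [hcBdef]
        exact h3
      linarith
    calc ∑ i, p i * (∑ ss, (v i ss) ^ 2) ≤ ∑ i, p i * (∑ s, b s ^ 2 + cB) :=
          Finset.sum_le_sum fun i _ => mul_le_mul_of_nonneg_left (hband i) (hp0 i)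
    _ = (∑ i, p i) * (∑ s, b s ^ 2 + cB) := by rw [← Finset.sum_mul]
    _ = ∑ s, b s ^ 2 + cB := by rw [hp1, one_mul]
  exact mul_le_mul (Real.sqrt_le_sqrt hXXle) (Real.sqrt_le_sqrt hYYle)
    (Real.sqrt_nonneg _) (Real.sqrt_nonneg _)
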